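/- If the k×k matrix B with entries b_{ij} = ‖u_{ij}‖² has full rank k, then the set D is convex and, for every α ∈ P_m^+, the function H_lik(·; α) is strictly convex on D. (Proposition 3 of the paper: if rank(B) = k, then for all α, H_lik(f; α) is a convex function on the domain of pmfs.) -/

import Mathlib

open Matrix

section aux
variable {N : Type*} [Fintype N] [DecidableEq N]

lemma myPosDef_smul {A : Matrix N N ℝ} (hA : A.PosDef) {c : ℝ} (hc : 0 < c) :
    (c • A).PosDef := by
  refine Matrix.PosDef.of_dotProduct_mulVec_pos ?_ (fun x hx => ?_)
  · unfold Matrix.IsHermitian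
    rw [conjTranspose_smul, hA.1]; simp
  · rw [smul_mulVec, dotProduct_smul, smul_eq_mul]
    exact mul_pos hc (hA.dotProduct_mulVec_pos hx)

lemma myPosSemidef_smul {A : Matrix N N ℝ} (hA : A.PosSemidef) {c : ℝ} (hc : 0 ≤ c) :
    (c • A).PosSemidef := by
  refine Matrix.PosSemidef.of_dotProduct_mulVec_nonneg ?_ (fun x => ?_)
  · unfold Matrix.IsHermitian
    rw [conjTranspose_smul, hA.1]; simp
  · rw [smul_mulVec, dotProduct_smul, smul_eq_mul]
    exact mul_nonneg hc (hA.dotProduct_mulVec_nonneg x)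

lemma myPosDef_comb {A B : Matrix N N ℝ} (hA : A.PosDef) (hB : B.PosDef)
    {a b : ℝ} (ha : 0 ≤ a) (hb : 0 ≤ b) (hab : a + b = 1) :
    (a • A + b • B).PosDef := by
  rcases eq_or_lt_of_le ha with h0 | ha'
  · have hb1 : b = 1 := by linarith
    simpa [← h0, hb1] using hB
  · exact (myPosDef_smul hA ha').add_posSemidef (myPosSemidef_smul hB.posSemidef hb)

lemma log_comb_le {a b x : ℝ} (ha : 0 < a) (hb : 0 < b) (hab : a + b = 1) (hx : 0 < x) :
    b * Real.log x ≤ Real.log (a + b * x) := by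
  rcases eq_or_ne x 1 with h1 | h1
  · simp [h1, hab]
  · have := strictConcaveOn_log_Ioi.2 (Set.mem_Ioi.mpr one_pos) (Set.mem_Ioi.mpr hx)
      (Ne.symm h1) ha hb hab
    simp only [smul_eq_mul, Real.log_one, mul_zero, zero_add, mul_one] at this
    exact this.le

lemma log_comb_lt {a b x : ℝ} (ha : 0 < a) (hb : 0 < b) (hab : a + b = 1) (hx : 0 < x)
    (h1 : x ≠ 1) : b * Real.log x < Real.log (a + b * x) := by
  have := strictConcaveOn_log_Ioi.2 (Set.mem_Ioi.mpr one_pos) (Set.mem_Ioi.mpr hx)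
    (Ne.symm h1) ha hb hab
  simpa using this

lemma logdet_strict {A B : Matrix N N ℝ} (hA : A.PosDef) (hB : B.PosDef) (hne : A ≠ B)
    {a b : ℝ} (ha : 0 < a) (hb : 0 < b) (hab : a + b = 1) :
    a * Real.log A.det + b * Real.log B.det < Real.log (a • A + b • B).det := by
  classical
  obtain ⟨Q, hQps, hQQ⟩ : ∃ Q : Matrix N N ℝ, Q.PosSemidef ∧ Q * Q = A := by
    open scoped MatrixOrder in
    exact ⟨CFC.sqrt A, (CFC.sqrt_nonneg A).posSemidef, CFC.sqrt_mul_sqrt_self A hA.posSemidef.nonneg⟩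
  have hdetA : 0 < A.det := hA.det_pos
  have hQdet : Q.det * Q.det = A.det := by rw [← det_mul, hQQ]
  have hQd0 : Q.det ≠ 0 := by
    intro h; rw [h, mul_zero] at hQdet; exact hdetA.ne' hQdet.symm
  have hQinv : Q * Q⁻¹ = 1 := mul_nonsing_inv Q (by simpa using hQd0)
  have hQinv' : Q⁻¹ * Q = 1 := nonsing_inv_mul Q (by simpa using hQd0)
  have hQh : Q.IsHermitian := hQps.1
  have hQih : (Q⁻¹).IsHermitian := hQh.inv
  set M := Q⁻¹ * B * Q⁻¹ with hMdef
  have hMh : M.IsHermitian := by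
    unfold Matrix.IsHermitian
    rw [hMdef, conjTranspose_mul, conjTranspose_mul, hQih, hB.1, mul_assoc]
  have hQBQ : Q * M * Q = B := by
    rw [hMdef]
    have h1 : Q * (Q⁻¹ * B * Q⁻¹) * Q = (Q * Q⁻¹) * B * (Q⁻¹ * Q) := by
      simp only [mul_assoc]
    rw [h1, hQinv, hQinv', one_mul, mul_one]
  have hMpd : M.PosDef := by
    refine Matrix.PosDef.of_dotProduct_mulVec_pos hMh (fun x hx => ?_)
    have hy : Q⁻¹ *ᵥ x ≠ 0 := by
      intro h
      apply hx
      have := congrArg (fun v => Q *ᵥ v) h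
      simpa [mulVec_mulVec, hQinv] using this
    have hB2 := hB.dotProduct_mulVec_pos hy
    have hrw : star x ⬝ᵥ M *ᵥ x = star (Q⁻¹ *ᵥ x) ⬝ᵥ B *ᵥ (Q⁻¹ *ᵥ x) := by
      rw [star_mulVec, hQih, dotProduct_mulVec, hMdef]
      simp only [mulVec_mulVec, Matrix.mul_assoc]
      rw [dotProduct_mulVec, vecMul_vecMul]
    rwa [hrw]
  -- spectral data of M
  set U : Matrix N N ℝ := (hMh.eigenvectorUnitary : Matrix N N ℝ) with hUdef
  have hUU : U * star U = 1 := (Matrix.mem_unitaryGroup_iff).mp hMh.eigenvectorUnitary.2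
  have hUU' : star U * U = 1 := (Matrix.mem_unitaryGroup_iff').mp hMh.eigenvectorUnitary.2
  set μ : N → ℝ := hMh.eigenvalues with hμdef
  have hspec : M = U * diagonal μ * star U := by
    have := hMh.spectral_theorem
    simpa [RCLike.ofReal_real_eq_id] using this
  have hμpos : ∀ i, 0 < μ i := fun i => hMpd.eigenvalues_pos i
  have hdetM : M.det = ∏ i, μ i := by
    have := hMh.det_eq_prod_eigenvalues
    simpa using this
  have hdetUU : U.det * (star U).det = 1 := by
    rw [← det_mul, hUU, det_one]
  -- det of the combination of 1 and M
  have hconj : ∀ (c : ℝ) (X : Matrix N N ℝ), c • (U * X * star U) = U * (c • X) * star U := by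
    intro c X
    rw [← smul_mul_assoc, ← mul_smul_comm]
  have hmid : a • (1 : Matrix N N ℝ) + b • diagonal μ = diagonal (fun i => a + b * μ i) := by
    rw [smul_one_eq_diagonal, ← diagonal_smul, ← diagonal_add]
    congr 1
  have hcombM : a • (1 : Matrix N N ℝ) + b • M = U * diagonal (fun i => a + b * μ i) * star U := by
    have h1 : (1 : Matrix N N ℝ) = U * 1 * star U := by rw [mul_one, hUU]
    rw [hspec]
    nth_rewrite 1 [h1]
    rw [hconj, hconj, ← Matrix.add_mul, ← Matrix.mul_add, hmid]
  have hdet_comb1 : (a • (1 : Matrix N N ℝ) + b • M).det = ∏ i, (a + b * μ i) := by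
    rw [hcombM, det_mul, det_mul, mul_comm U.det _, mul_assoc, hdetUU, mul_one,
      det_diagonal]
  -- relate A, B, comb to Q-conjugates
  have hcomb : a • A + b • B = Q * (a • (1 : Matrix N N ℝ) + b • M) * Q := by
    rw [Matrix.mul_add, Matrix.add_mul, mul_smul_comm, smul_mul_assoc, mul_smul_comm,
      smul_mul_assoc, mul_one, hQQ, hQBQ]
  have hdetB : B.det = A.det * M.det := by
    rw [← hQBQ, det_mul, det_mul, mul_comm Q.det M.det, mul_assoc, ← hQdet]
    ring
  have hdet_comb : (a • A + b • B).det = A.det * ∏ i, (a + b * μ i) := by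
    rw [hcomb, det_mul, det_mul, hdet_comb1, mul_comm Q.det _, mul_assoc, hQdet]
    ring
  -- existence of an eigenvalue ≠ 1
  have hM1 : M ≠ 1 := by
    intro h
    apply hne
    rw [← hQQ, ← hQBQ, h, mul_one]
  have hex : ∃ i, μ i ≠ 1 := by
    by_contra h
    push_neg at h
    apply hM1
    rw [hspec]
    have : diagonal μ = 1 := by
      rw [show μ = fun _ => (1:ℝ) from funext h]
      exact diagonal_one
    rw [this, mul_one, hUU]
  obtain ⟨i₀, hi₀⟩ := hex
  -- final computation
  have hlog_comb : Real.log (a • A + b • B).det = Real.log A.det + ∑ i, Real.log (a + b * μ i) := by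
    rw [hdet_comb, Real.log_mul hdetA.ne' (by
      refine (Finset.prod_pos fun i _ => ?_).ne'
      have := hμpos i
      nlinarith), Real.log_prod]
    intro i _
    have := hμpos i
    nlinarith
  have hlogB : Real.log B.det = Real.log A.det + ∑ i, Real.log (μ i) := by
    rw [hdetB, hdetM, Real.log_mul hdetA.ne'
      (Finset.prod_pos fun i _ => hμpos i).ne', Real.log_prod]
    intro i _
    exact (hμpos i).ne'
  rw [hlog_comb, hlogB]
  have key : ∑ i, b * Real.log (μ i) < ∑ i, Real.log (a + b * μ i) := by
    refine Finset.sum_lt_sum (fun i _ => log_comb_le ha hb hab (hμpos i)) ⟨i₀, Finset.mem_univ _, ?_⟩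
    exact log_comb_lt ha hb hab (hμpos i₀) hi₀
  rw [← Finset.mul_sum] at key
  have hL : a * Real.log A.det + b * Real.log A.det = Real.log A.det := by
    rw [← add_mul, hab, one_mul]
  linarith

lemma logdet_le {A B : Matrix N N ℝ} (hA : A.PosDef) (hB : B.PosDef)
    {a b : ℝ} (ha : 0 < a) (hb : 0 < b) (hab : a + b = 1) :
    a * Real.log A.det + b * Real.log B.det ≤ Real.log (a • A + b • B).det := by
  rcases eq_or_ne A B with rfl | hne
  · have h1 : a • A + b • A = A := by rw [← add_smul, hab, one_smul]
    rw [h1, ← add_mul, hab, one_mul]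
  · exact (logdet_strict hA hB hne ha hb hab).le

end aux

/-- Proposition 3: if the matrix `B` with entries `b_{ij} = ‖u_{ij}‖²` has full
rank `k`, then the domain `D` of pmfs with positive definite covariance fields
is convex and `H_lik(·; α)` is strictly convex on `D` for every `α ∈ P_m^+`. -/
theorem Hlik_strictConvex
    (n k m : ℕ) (hn : 1 ≤ n) (hk : 1 ≤ k) (hm : 1 ≤ m)
    (u : Fin k → Fin k → EuclideanSpace ℝ (Fin n))
    (B : Matrix (Fin k) (Fin k) ℝ) (hB : ∀ i j, B i j = ‖u i j‖ ^ 2)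
    (hBrank : B.rank = k)
    (C : Fin k → Fin m → Matrix (Fin n) (Fin n) ℝ)
    (hCsymm : ∀ j s, (C j s).IsHermitian) (hCpd : ∀ j s, (C j s).PosDef)
    (W : (Fin k → ℝ) → Fin k → Matrix (Fin n) (Fin n) ℝ)
    (hW : ∀ f j, W f j = ∑ i : Fin k, f i • vecMulVec (u i j) (u i j))
    (D : Set (Fin k → ℝ))
    (hD : D = {f ∈ stdSimplex ℝ (Fin k) | ∀ j : Fin k, (W f j).PosDef})
    (Hlik : (Fin k → ℝ) → (Fin m → ℝ) → ℝ)
    (hHlik : ∀ f α, Hlik f α = ∑ s : Fin m, α s *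
      ∑ j : Fin k, ((W f j * (C j s)⁻¹).trace
        - Real.log (W f j * (C j s)⁻¹).det - (n : ℝ))) :
    Convex ℝ D ∧
      ∀ α ∈ stdSimplex ℝ (Fin m), StrictConvexOn ℝ D (fun f => Hlik f α) := by
  have hWlin : ∀ (f g : Fin k → ℝ) (a b : ℝ) (j : Fin k),
      W (a • f + b • g) j = a • W f j + b • W g j := by
    intro f g a b j
    rw [hW, hW, hW, Finset.smul_sum, Finset.smul_sum, ← Finset.sum_add_distrib]
    refine Finset.sum_congr rfl fun i _ => ?_
    simp [add_smul, smul_smul]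
  have hconv : Convex ℝ D := by
    rw [hD]
    intro f hf g hg a b ha hb hab
    refine ⟨convex_stdSimplex ℝ (Fin k) hf.1 hg.1 ha hb hab, fun j => ?_⟩
    rw [hWlin]
    exact myPosDef_comb (hf.2 j) (hg.2 j) ha hb hab
  refine ⟨hconv, fun α hα => ⟨hconv, ?_⟩⟩
  intro f hf g hg hne a b ha hb hab
  rw [hD] at hf hg
  have hfPD : ∀ j, (W f j).PosDef := hf.2
  have hgPD : ∀ j, (W g j).PosDef := hg.2
  have hcPD : ∀ j, (W (a • f + b • g) j).PosDef := fun j => by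
    rw [hWlin]; exact myPosDef_comb (hfPD j) (hgPD j) ha.le hb.le hab
  -- find `j₀` with `W f j₀ ≠ W g j₀` using the rank hypothesis
  have hr : Module.finrank ℝ ↥(LinearMap.range B.mulVecLin)
      = Module.finrank ℝ (Fin k → ℝ) := by
    rw [Module.finrank_fin_fun]
    exact hBrank
  have hrange : LinearMap.range B.mulVecLin = ⊤ := Submodule.eq_top_of_finrank_eq hr
  have hsurj : Function.Surjective B.mulVecLin := LinearMap.range_eq_top.mp hrange
  have hinj : Function.Injective B.mulVecLin :=
    (LinearMap.injective_iff_surjective_of_finrank_eq_finrank rfl).mpr hsurj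
  have hBunit : IsUnit B := by
    rw [← mulVec_injective_iff_isUnit]
    exact hinj
  have hvinj : Function.Injective B.vecMul := vecMul_injective_iff_isUnit.mpr hBunit
  have hnorm : ∀ (v : EuclideanSpace ℝ (Fin n)), ‖v‖ ^ 2 = ∑ x, v x * v x := by
    intro v
    rw [EuclideanSpace.norm_eq, Real.sq_sqrt (Finset.sum_nonneg fun x _ => sq_nonneg _)]
    refine Finset.sum_congr rfl fun x _ => ?_
    rw [Real.norm_eq_abs, sq_abs, sq]
  have htraceW : ∀ (h : Fin k → ℝ) j, (W h j).trace = (B.vecMul h) j := by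
    intro h j
    rw [hW, trace_sum]
    have : B.vecMul h j = ∑ i, h i * B i j := by
      simp [Matrix.vecMul, dotProduct]
    rw [this]
    refine Finset.sum_congr rfl fun i _ => ?_
    have htr2 : (vecMulVec (u i j) (u i j)).trace = ∑ x, u i j x * u i j x := by
      simp [Matrix.trace, Matrix.diag, vecMulVec_apply]
    rw [trace_smul, smul_eq_mul, hB, hnorm, htr2]
  obtain ⟨j₀, hj₀⟩ : ∃ j, W f j ≠ W g j := by
    have h1 : B.vecMul f ≠ B.vecMul g := fun h => hne (hvinj h)
    obtain ⟨j, hj⟩ := Function.ne_iff.mp h1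
    exact ⟨j, fun h => hj (by rw [← htraceW, ← htraceW, h])⟩
  -- per-(s,j) inequalities
  have hdetCinv : ∀ j s, 0 < ((C j s)⁻¹).det := fun j s => by
    rw [det_nonsing_inv, Ring.inverse_eq_inv']
    exact inv_pos.mpr (hCpd j s).det_pos
  have htr : ∀ (s : Fin m) (j : Fin k), (W (a • f + b • g) j * (C j s)⁻¹).trace
      = a * (W f j * (C j s)⁻¹).trace + b * (W g j * (C j s)⁻¹).trace := by
    intro s j
    rw [hWlin, Matrix.add_mul, smul_mul_assoc, smul_mul_assoc, trace_add, trace_smul,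
      trace_smul, smul_eq_mul, smul_eq_mul]
  have hlogdet : ∀ (s : Fin m) (j : Fin k) (X : Matrix (Fin n) (Fin n) ℝ), X.PosDef →
      Real.log (X * (C j s)⁻¹).det = Real.log X.det + Real.log ((C j s)⁻¹).det := by
    intro s j X hX
    rw [det_mul, Real.log_mul hX.det_pos.ne' (hdetCinv j s).ne']
  have hreal : ∀ (Tf Tg lf lg lc L : ℝ), a * lf + b * lg ≤ lc →
      (a * Tf + b * Tg) - (lc + L) - (n : ℝ)
        ≤ a * (Tf - (lf + L) - (n : ℝ)) + b * (Tg - (lg + L) - (n : ℝ)) := by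
    intro Tf Tg lf lg lc L h
    have hb' : b = 1 - a := by linarith
    subst hb'
    nlinarith [h]
  have hreal' : ∀ (Tf Tg lf lg lc L : ℝ), a * lf + b * lg < lc →
      (a * Tf + b * Tg) - (lc + L) - (n : ℝ)
        < a * (Tf - (lf + L) - (n : ℝ)) + b * (Tg - (lg + L) - (n : ℝ)) := by
    intro Tf Tg lf lg lc L h
    have hb' : b = 1 - a := by linarith
    subst hb'
    nlinarith [h]
  have hweak : ∀ (s : Fin m) (j : Fin k),
      (W (a • f + b • g) j * (C j s)⁻¹).trace
          - Real.log (W (a • f + b • g) j * (C j s)⁻¹).det - (n : ℝ)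
        ≤ a * ((W f j * (C j s)⁻¹).trace - Real.log (W f j * (C j s)⁻¹).det - (n : ℝ))
          + b * ((W g j * (C j s)⁻¹).trace - Real.log (W g j * (C j s)⁻¹).det - (n : ℝ)) := by
    intro s j
    have hlog := logdet_le (hfPD j) (hgPD j) ha hb hab
    rw [← hWlin f g a b j] at hlog
    rw [htr s j, hlogdet s j _ (hcPD j), hlogdet s j _ (hfPD j), hlogdet s j _ (hgPD j)]
    exact hreal _ _ _ _ _ _ hlog
  have hstrict : ∀ (s : Fin m),
      (W (a • f + b • g) j₀ * (C j₀ s)⁻¹).trace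
          - Real.log (W (a • f + b • g) j₀ * (C j₀ s)⁻¹).det - (n : ℝ)
        < a * ((W f j₀ * (C j₀ s)⁻¹).trace - Real.log (W f j₀ * (C j₀ s)⁻¹).det - (n : ℝ))
          + b * ((W g j₀ * (C j₀ s)⁻¹).trace - Real.log (W g j₀ * (C j₀ s)⁻¹).det - (n : ℝ)) := by
    intro s
    have hlog := logdet_strict (hfPD j₀) (hgPD j₀) hj₀ ha hb hab
    rw [← hWlin f g a b j₀] at hlog
    rw [htr s j₀, hlogdet s j₀ _ (hcPD j₀), hlogdet s j₀ _ (hfPD j₀), hlogdet s j₀ _ (hgPD j₀)]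
    exact hreal' _ _ _ _ _ _ hlog
  -- sum over j
  have hsumj : ∀ (s : Fin m),
      (∑ j, ((W (a • f + b • g) j * (C j s)⁻¹).trace
          - Real.log (W (a • f + b • g) j * (C j s)⁻¹).det - (n : ℝ)))
        < a * (∑ j, ((W f j * (C j s)⁻¹).trace
            - Real.log (W f j * (C j s)⁻¹).det - (n : ℝ)))
          + b * (∑ j, ((W g j * (C j s)⁻¹).trace
            - Real.log (W g j * (C j s)⁻¹).det - (n : ℝ))) := by
    intro s
    rw [Finset.mul_sum, Finset.mul_sum, ← Finset.sum_add_distrib]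
    exact Finset.sum_lt_sum (fun j _ => hweak s j) ⟨j₀, Finset.mem_univ _, hstrict s⟩
  obtain ⟨s₀, hs₀⟩ : ∃ s, 0 < α s := by
    by_contra hcon
    push_neg at hcon
    have h0 : ∑ s, α s = 0 :=
      Finset.sum_eq_zero fun s _ => le_antisymm (hcon s) (hα.1 s)
    rw [hα.2] at h0
    norm_num at h0
  -- final assembly
  simp only [smul_eq_mul]
  rw [hHlik, hHlik, hHlik, Finset.mul_sum, Finset.mul_sum, ← Finset.sum_add_distrib]
  refine Finset.sum_lt_sum (fun s _ => ?_) ⟨s₀, Finset.mem_univ _, ?_⟩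
  · calc α s * (∑ j, ((W (a • f + b • g) j * (C j s)⁻¹).trace
          - Real.log (W (a • f + b • g) j * (C j s)⁻¹).det - (n : ℝ)))
        ≤ α s * (a * (∑ j, ((W f j * (C j s)⁻¹).trace
            - Real.log (W f j * (C j s)⁻¹).det - (n : ℝ)))
          + b * (∑ j, ((W g j * (C j s)⁻¹).trace
            - Real.log (W g j * (C j s)⁻¹).det - (n : ℝ)))) :=
          mul_le_mul_of_nonneg_left (hsumj s).le (hα.1 s)
      _ = _ := by ring
  · calc α s₀ * (∑ j, ((W (a • f + b • g) j * (C j s₀)⁻¹).trace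
          - Real.log (W (a • f + b • g) j * (C j s₀)⁻¹).det - (n : ℝ)))
        < α s₀ * (a * (∑ j, ((W f j * (C j s₀)⁻¹).trace
            - Real.log (W f j * (C j s₀)⁻¹).det - (n : ℝ)))
          + b * (∑ j, ((W g j * (C j s₀)⁻¹).trace
            - Real.log (W g j * (C j s₀)⁻¹).det - (n : ℝ)))) :=
          (mul_lt_mul_iff_right₀ hs₀).mpr (hsumj s₀)
      _ = _ := by ring
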